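/- arXiv:1412.7217 — 3 statements merged into one kernel-verified Lean document; each statement's English description precedes it below -/
import Mathlib

section
/- Let b⁰_0,…,b⁰_{d_x−1} be an integral basis over K[x] and b^∞_0,…,b^∞_{d_x−1} an integral basis over K[1/x], and let W ∈ GL_{d_x}(K[x,1/x]) be the change-of-basis matrix determined by b^∞_j = Σ_{i=0}^{d_x−1} W_{i+1,j+1} b⁰_i. Define the K-subspaces E_0 = { (Σ_i u_i(x) b⁰_i)·dx/r : u ∈ K[x]^{d_x} } and E_∞ = { (Σ_i u_i(x,1/x) b^∞_i)·dx/r : u ∈ K[x,1/x]^{d_x}, ord_∞(u) > ord_0(W) − deg r + 1 } of Ω¹_{L/K}, and the K-subspaces B_0 = { Σ_i v_i(x) b⁰_i : v ∈ K[x]^{d_x} } and B_∞ = { Σ_i v_i(x,1/x) b^∞_i : v ∈ K[x,1/x]^{d_x}, ord_∞(v) > ord_0(W) } of L. Then E_0 ∩ E_∞ and d(B_0 ∩ B_∞) are finite-dimensional K-vector spaces. -/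
open Polynomial
open scoped Classical

/-- The Sylvester matrix of two polynomials `f, g ∈ R[y]`, where `f` is regarded as having
degree (at most) `m` and `g` as having degree (at most) `n`. -/
noncomputable def sylvesterMatrix {R : Type*} [CommRing R] (f g : Polynomial R) (m n : ℕ) :
    Matrix (Fin (n + m)) (Fin (n + m)) R :=
  Matrix.of fun i j =>
    if (j : ℕ) < n then
      (if (j : ℕ) ≤ (i : ℕ) then f.coeff ((i : ℕ) - (j : ℕ)) else 0)
    else
      (if (j : ℕ) - n ≤ (i : ℕ) then g.coeff ((i : ℕ) - ((j : ℕ) - n)) else 0)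

/-- The resultant of `f` and `g` (regarded as having degrees `m` and `n` respectively). -/
noncomputable def resultant {R : Type*} [CommRing R] (f g : Polynomial R) (m n : ℕ) : R :=
  (sylvesterMatrix f g m n).det

/-- A Laurent polynomial, encoded as a finitely supported function `ℤ →₀ K` of
coefficients, viewed as a rational function: `f ↦ ∑ k, f k • x^k`. -/
noncomputable def laurentToRatFunc {K : Type*} [Field K] (f : ℤ →₀ K) : RatFunc K :=
  f.sum fun k a => RatFunc.C a * (RatFunc.X : RatFunc K) ^ k

namespace Th36Aux

variable {K : Type*} [Field K]

noncomputable def Mspan (K : Type*) [Field K] (E : ℤ) : Submodule K (RatFunc K) :=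
  Submodule.span K {g : RatFunc K | ∃ k : ℤ, k ≤ E ∧ g = (RatFunc.X : RatFunc K) ^ k}

lemma intDegree_X_zpow (k : ℤ) : ((RatFunc.X : RatFunc K) ^ k).intDegree = k := by
  have hX : (RatFunc.X : RatFunc K) ≠ 0 := RatFunc.X_ne_zero
  have hpow : ∀ n : ℕ, ((RatFunc.X : RatFunc K) ^ n).intDegree = n := by
    intro n
    have h : (RatFunc.X : RatFunc K) ^ n
        = algebraMap (Polynomial K) (RatFunc K) (Polynomial.X ^ n) := by
      rw [map_pow, RatFunc.algebraMap_X]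
    rw [h, RatFunc.intDegree_polynomial, Polynomial.natDegree_X_pow]
  cases k with
  | ofNat n => simpa using hpow n
  | negSucc n =>
    have h1 : (RatFunc.X : RatFunc K) ^ (Int.negSucc n)
        = ((RatFunc.X : RatFunc K) ^ (n + 1))⁻¹ := zpow_negSucc _ _
    have hXn : ((RatFunc.X : RatFunc K) ^ (n + 1)) ≠ 0 := pow_ne_zero _ hX
    have h2 : ((RatFunc.X : RatFunc K) ^ (n + 1)) * ((RatFunc.X : RatFunc K) ^ (n + 1))⁻¹ = 1 :=
      mul_inv_cancel₀ hXn
    have h3 := RatFunc.intDegree_mul hXn (inv_ne_zero hXn)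
    rw [h2, RatFunc.intDegree_one] at h3
    have h4 := hpow (n + 1)
    rw [h1, Int.negSucc_eq]
    omega

lemma mem_Mspan (E : ℤ) (f : ℤ →₀ K) (h : ∀ k ∈ f.support, k ≤ E) :
    laurentToRatFunc f ∈ Mspan K E := by
  apply Submodule.finsuppSum_mem
  intro k hk
  rw [← RatFunc.smul_eq_C_mul]
  exact Submodule.smul_mem _ _
    (Submodule.subset_span ⟨k, h k (Finsupp.mem_support_iff.mpr hk), rfl⟩)

lemma mul_mem_Mspan {E₁ E₂ : ℤ} {g h : RatFunc K} (hg : g ∈ Mspan K E₁) (hh : h ∈ Mspan K E₂) :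
    g * h ∈ Mspan K (E₁ + E₂) := by
  have hmem := Submodule.mul_mem_mul hg hh
  rw [Mspan, Mspan, Submodule.span_mul_span] at hmem
  refine Submodule.span_le.mpr ?_ hmem
  rintro x ⟨a, ha, b, hb, rfl⟩
  obtain ⟨k, hk, rfl⟩ := ha
  obtain ⟨l, hl, rfl⟩ := hb
  exact Submodule.subset_span ⟨k + l, by omega, (zpow_add₀ RatFunc.X_ne_zero k l).symm⟩

lemma eq_zero_or_intDegree_le_of_mem_Mspan {E : ℤ} {g : RatFunc K} (hg : g ∈ Mspan K E) :
    g = 0 ∨ g.intDegree ≤ E := by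
  induction hg using Submodule.span_induction with
  | mem x hx =>
    obtain ⟨k, hk, rfl⟩ := hx
    exact Or.inr (by rw [intDegree_X_zpow]; exact hk)
  | zero => exact Or.inl rfl
  | add x y _ _ ihx ihy =>
    rcases ihx with rfl | hx
    · simpa using ihy
    rcases ihy with rfl | hy
    · simpa using Or.inr hx
    by_cases hxy : x + y = 0
    · exact Or.inl hxy
    · refine Or.inr ?_
      by_cases hy0 : y = 0
      · subst hy0; simpa using hx
      exact (RatFunc.intDegree_add_le hy0 hxy).trans (max_le hx hy)
  | smul a x _ ih =>
    by_cases ha : a = 0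
    · exact Or.inl (by simp [ha])
    rcases ih with rfl | hx
    · exact Or.inl (by simp)
    by_cases hx0 : x = 0
    · exact Or.inl (by simp [hx0])
    refine Or.inr ?_
    rw [RatFunc.smul_eq_C_mul]
    have hC : (RatFunc.C a : RatFunc K) ≠ 0 := by
      rw [← RatFunc.algebraMap_C]
      exact RatFunc.algebraMap_ne_zero (by simpa using ha)
    rw [RatFunc.intDegree_mul hC hx0, RatFunc.intDegree_C]
    omega

end Th36Aux

/-- **Finite dimensionality of `E₀ ∩ E_∞` and `d(B₀ ∩ B_∞)`** (part of Theorem 3.6 of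
the paper).  Setup: `K` a field of characteristic zero, `Q ∈ K[x][y]` monic in `y` of
degree `d_x ≥ 1` and irreducible over `K(x)`, `L = K(x)[y]/(Q)` (presented as a field `L`
with a generating root `y` of `Q`), `Δ` the discriminant of `Q` with respect to `y` and
`r` its squarefree part, `b⁰` an integral basis for `L` over `K[x]`, `b^∞` an integral
basis for `L` over `K[1/x]`, `W` the change-of-basis matrix (with Laurent polynomial
entries, encoded as finitely supported coefficient functions `ℤ →₀ K`) with
`b^∞ j = ∑ i, W i j • b⁰ i`, and `c = ord₀(W)` the minimal degree appearing in the
entries of `W`.  With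
`E₀ = { (∑ u i • b⁰ i)·dx/r : u polynomial }`,
`E_∞ = { (∑ u i • b^∞ i)·dx/r : u Laurent, ord_∞ u > ord₀(W) - deg r + 1 }`,
`B₀ = { ∑ v i • b⁰ i : v polynomial }`,
`B_∞ = { ∑ v i • b^∞ i : v Laurent, ord_∞ v > ord₀(W) }`,
the `K`-vector spaces spanned by `E₀ ∩ E_∞ ⊆ Ω¹_{L/K}` and by
`d(B₀ ∩ B_∞) ⊆ Ω¹_{L/K}` are finite dimensional. -/
theorem finite_dimensionality_of_E_and_dB {K L : Type*} [Field K] [CharZero K]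
    [Field L] [Algebra (RatFunc K) L] [Algebra K L] [IsScalarTower K (RatFunc K) L]
    (dx : ℕ) (hdx : 1 ≤ dx)
    (Q : Polynomial (Polynomial K)) (hQM : Q.Monic) (hQdeg : Q.natDegree = dx)
    (hQirr : Irreducible (Q.map (algebraMap (Polynomial K) (RatFunc K))))
    (y : L) (hy : Polynomial.aeval y (Q.map (algebraMap (Polynomial K) (RatFunc K))) = 0)
    (hgen : Algebra.adjoin (RatFunc K) {y} = ⊤)
    (Δ r : Polynomial K)
    (hΔ : Δ = _root_.resultant Q (Polynomial.derivative Q) dx (dx - 1)) (hΔ0 : Δ ≠ 0)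
    (hr : r = Δ / EuclideanDomain.gcd Δ (Polynomial.derivative Δ))
    (b0 : Fin dx → L)
    (hb0_li : LinearIndependent (RatFunc K) b0)
    (hb0_span : Submodule.span (RatFunc K) (Set.range b0) = ⊤)
    (hb0_int : ∀ z : L,
      (∃ c : Fin dx → Polynomial K,
          z = ∑ i, algebraMap (RatFunc K) L (algebraMap (Polynomial K) (RatFunc K) (c i)) * b0 i)
        ↔ ((algebraMap (RatFunc K) L).comp
            (algebraMap (Polynomial K) (RatFunc K))).IsIntegralElem z)
    (binf : Fin dx → L)
    (hbinf_li : LinearIndependent (RatFunc K) binf)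
    (hbinf_span : Submodule.span (RatFunc K) (Set.range binf) = ⊤)
    (hbinf_int : ∀ z : L,
      (∃ c : Fin dx → Polynomial K,
          z = ∑ i, algebraMap (RatFunc K) L
            (Polynomial.aeval ((RatFunc.X : RatFunc K)⁻¹) (c i)) * binf i)
        ↔ ((algebraMap (RatFunc K) L).comp
            (Polynomial.aeval ((RatFunc.X : RatFunc K)⁻¹) :
              Polynomial K →ₐ[K] RatFunc K).toRingHom).IsIntegralElem z)
    (W : Matrix (Fin dx) (Fin dx) (ℤ →₀ K))
    (hW : ∀ j, binf j = ∑ i, algebraMap (RatFunc K) L (laurentToRatFunc (W i j)) * b0 i)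
    (c : ℤ) (hc : IsLeast {k : ℤ | ∃ i j, k ∈ (W i j).support} c) :
    FiniteDimensional K
      ↥(Submodule.span K
        (({ω | ∃ u : Fin dx → Polynomial K,
            ω = ((∑ i, algebraMap (RatFunc K) L (algebraMap (Polynomial K) (RatFunc K) (u i))
                    * b0 i) /
                  algebraMap (RatFunc K) L (algebraMap (Polynomial K) (RatFunc K) r)) •
                (KaehlerDifferential.D K L) (algebraMap (RatFunc K) L RatFunc.X)} :
            Set (Ω[L⁄K])) ∩
         {ω | ∃ u : Fin dx → (ℤ →₀ K),
            (∀ i, ∀ k ∈ (u i).support, c - (r.natDegree : ℤ) + 1 < -k) ∧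
            ω = ((∑ i, algebraMap (RatFunc K) L (laurentToRatFunc (u i)) * binf i) /
                  algebraMap (RatFunc K) L (algebraMap (Polynomial K) (RatFunc K) r)) •
                (KaehlerDifferential.D K L) (algebraMap (RatFunc K) L RatFunc.X)})) ∧
    FiniteDimensional K
      ↥(Submodule.span K
        (⇑(KaehlerDifferential.D K L) ''
          (({f | ∃ v : Fin dx → Polynomial K,
              f = ∑ i, algebraMap (RatFunc K) L (algebraMap (Polynomial K) (RatFunc K) (v i))
                    * b0 i} : Set L) ∩
           {f | ∃ v : Fin dx → (ℤ →₀ K),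
              (∀ i, ∀ k ∈ (v i).support, c < -k) ∧
              f = ∑ i, algebraMap (RatFunc K) L (laurentToRatFunc (v i)) * binf i}))) := by
  
  classical
  obtain ⟨D, hD⟩ : ∃ D : ℤ, ∀ (i j : Fin dx), ∀ k ∈ (W i j).support, k ≤ D := by
    obtain ⟨M, hM⟩ := Finset.exists_le
      (Finset.univ.biUnion fun p : Fin dx × Fin dx => (W p.1 p.2).support)
    exact ⟨M, fun i j k hk => hM k (Finset.mem_biUnion.mpr ⟨(i, j), Finset.mem_univ _, hk⟩)⟩
  have core : ∀ t : ℤ, ∃ V : Submodule K L, FiniteDimensional K ↥V ∧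
      ∀ (u : Fin dx → Polynomial K) (v : Fin dx → (ℤ →₀ K)),
        (∀ i, ∀ k ∈ (v i).support, t < -k) →
        ((∑ i, algebraMap (RatFunc K) L (algebraMap (Polynomial K) (RatFunc K) (u i)) * b0 i)
          = ∑ i, algebraMap (RatFunc K) L (laurentToRatFunc (v i)) * binf i) →
        (∑ i, algebraMap (RatFunc K) L (algebraMap (Polynomial K) (RatFunc K) (u i)) * b0 i)
          ∈ V := by
    intro t
    set N : ℕ := (-t - 1 + D).toNat with hNdef
    refine ⟨Submodule.span K (Set.range fun p : Fin dx × Fin (N + 1) =>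
        algebraMap (RatFunc K) L (algebraMap (Polynomial K) (RatFunc K)
          ((Polynomial.X : Polynomial K) ^ (p.2 : ℕ))) * b0 p.1),
      FiniteDimensional.span_of_finite K (Set.finite_range _), ?_⟩
    intro u v hv heq
    have hcoord : ∀ i, algebraMap (Polynomial K) (RatFunc K) (u i)
        = ∑ j, laurentToRatFunc (v j) * laurentToRatFunc (W i j) := by
      have hrw : (∑ j, algebraMap (RatFunc K) L (laurentToRatFunc (v j)) * binf j)
          = ∑ i, algebraMap (RatFunc K) L
              (∑ j, laurentToRatFunc (v j) * laurentToRatFunc (W i j)) * b0 i := by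
        simp only [hW, Finset.mul_sum, map_sum, map_mul, Finset.sum_mul, mul_assoc]
        exact Finset.sum_comm ..
      have h0 : ∑ i, (algebraMap (Polynomial K) (RatFunc K) (u i)
          - ∑ j, laurentToRatFunc (v j) * laurentToRatFunc (W i j)) • b0 i = 0 := by
        have hAC := heq.trans hrw
        simp only [Algebra.smul_def, map_sub, sub_mul, Finset.sum_sub_distrib, hAC, sub_self]
      intro i
      exact sub_eq_zero.mp (Fintype.linearIndependent_iff.mp hb0_li
        (fun i => algebraMap (Polynomial K) (RatFunc K) (u i)
          - ∑ j, laurentToRatFunc (v j) * laurentToRatFunc (W i j)) h0 i)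
    have hdeg : ∀ i, (u i).natDegree ≤ N := by
      intro i
      have hmem : algebraMap (Polynomial K) (RatFunc K) (u i)
          ∈ Th36Aux.Mspan K (-t - 1 + D) := by
        rw [hcoord i]
        refine Submodule.sum_mem _ fun j _ => ?_
        exact Th36Aux.mul_mem_Mspan
          (Th36Aux.mem_Mspan _ _ fun k hk => by have := hv j k hk; omega)
          (Th36Aux.mem_Mspan _ _ fun k hk => hD i j k hk)
      rcases Th36Aux.eq_zero_or_intDegree_le_of_mem_Mspan hmem with h | h
      · have hui : u i = 0 := by
          by_contra hne
          exact RatFunc.algebraMap_ne_zero hne h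
        simp [hui]
      · rw [RatFunc.intDegree_polynomial] at h
        omega
    apply Submodule.sum_mem
    intro i _
    rw [Polynomial.as_sum_range' (u i) (N + 1) (Nat.lt_succ_of_le (hdeg i))]
    rw [map_sum, map_sum, Finset.sum_mul]
    apply Submodule.sum_mem
    intro n hn
    rw [← Polynomial.C_mul_X_pow_eq_monomial, map_mul, map_mul, mul_assoc]
    have hsm : algebraMap (RatFunc K) L (algebraMap (Polynomial K) (RatFunc K)
          (Polynomial.C ((u i).coeff n)))
        = algebraMap K L ((u i).coeff n) := by
      rw [IsScalarTower.algebraMap_apply K (RatFunc K) L,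
        IsScalarTower.algebraMap_apply K (Polynomial K) (RatFunc K), Polynomial.algebraMap_eq]
    rw [hsm, ← Algebra.smul_def]
    exact Submodule.smul_mem _ _ (Submodule.subset_span
      ⟨(i, ⟨n, Finset.mem_range.mp hn⟩), rfl⟩)
  obtain ⟨VE, hVEfd, hVEmem⟩ := core (c - (r.natDegree : ℤ) + 1)
  obtain ⟨VB, hVBfd, hVBmem⟩ := core c
  haveI := hVEfd
  haveI := hVBfd
  set ρ : L := algebraMap (RatFunc K) L (algebraMap (Polynomial K) (RatFunc K) r) with hρdef
  set Dx : Ω[L⁄K] := (KaehlerDifferential.D K L) (algebraMap (RatFunc K) L RatFunc.X)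
    with hDxdef
  obtain ⟨φ, hφ⟩ : ∃ φ : L →ₗ[K] (Ω[L⁄K]), ∀ f : L, φ f = (f / ρ) • Dx := by
    refine ⟨{ toFun := fun f => (f / ρ) • Dx, map_add' := ?_, map_smul' := ?_ }, fun f => rfl⟩
    · intro a b
      show ((a + b) / ρ) • Dx = (a / ρ) • Dx + (b / ρ) • Dx
      rw [add_div, add_smul]
    · intro m a
      show ((m • a) / ρ) • Dx = m • ((a / ρ) • Dx)
      rw [Algebra.smul_def, mul_div_assoc, ← Algebra.smul_def, smul_assoc]
  constructor
  · have hsub : ({ω | ∃ u : Fin dx → Polynomial K,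
          ω = ((∑ i, algebraMap (RatFunc K) L (algebraMap (Polynomial K) (RatFunc K) (u i))
                  * b0 i) / ρ) • Dx} :
            Set (Ω[L⁄K])) ∩
        {ω | ∃ u : Fin dx → (ℤ →₀ K),
          (∀ i, ∀ k ∈ (u i).support, c - (r.natDegree : ℤ) + 1 < -k) ∧
          ω = ((∑ i, algebraMap (RatFunc K) L (laurentToRatFunc (u i)) * binf i) / ρ) • Dx}
        ⊆ ⇑φ '' (VE : Set L) := by
      rintro ω ⟨⟨u, hu⟩, ⟨v, hvbd, hv⟩⟩
      by_cases hDx0 : Dx = 0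
      · exact ⟨0, VE.zero_mem, by rw [hφ, zero_div, zero_smul, hu, hDx0, smul_zero]⟩
      by_cases hρ0 : ρ = 0
      · exact ⟨0, VE.zero_mem, by rw [hφ, zero_div, zero_smul, hu, hρ0, div_zero, zero_smul]⟩
      set f0 : L := ∑ i, algebraMap (RatFunc K) L
          (algebraMap (Polynomial K) (RatFunc K) (u i)) * b0 i with hf0
      set finf : L := ∑ i, algebraMap (RatFunc K) L (laurentToRatFunc (v i)) * binf i
        with hfinf
      have hkey : (f0 / ρ - finf / ρ) • Dx = 0 := by rw [sub_smul, ← hu, ← hv, sub_self]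
      have heq2 : f0 / ρ = finf / ρ := by
        by_contra hne
        have ha : f0 / ρ - finf / ρ ≠ 0 := sub_ne_zero.mpr hne
        apply hDx0
        calc Dx = (f0 / ρ - finf / ρ)⁻¹ • ((f0 / ρ - finf / ρ) • Dx) := by
              rw [smul_smul, inv_mul_cancel₀ ha, one_smul]
          _ = 0 := by rw [hkey, smul_zero]
      have hff : f0 = finf := by
        have h1 := congrArg (fun z => z * ρ) heq2
        simpa [div_mul_cancel₀, hρ0] using h1
      exact ⟨f0, hVEmem u v hvbd hff, by rw [hφ, hu]⟩
    have h2 : Submodule.span K (⇑φ '' (VE : Set L)) = VE.map φ := by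
      rw [← Submodule.map_span, Submodule.span_eq]
    exact Submodule.finiteDimensional_of_le ((Submodule.span_mono hsub).trans h2.le)
  · have hsub : ({f | ∃ v : Fin dx → Polynomial K,
          f = ∑ i, algebraMap (RatFunc K) L (algebraMap (Polynomial K) (RatFunc K) (v i))
                * b0 i} : Set L) ∩
        {f | ∃ v : Fin dx → (ℤ →₀ K),
          (∀ i, ∀ k ∈ (v i).support, c < -k) ∧
          f = ∑ i, algebraMap (RatFunc K) L (laurentToRatFunc (v i)) * binf i}
        ⊆ (VB : Set L) := by
      rintro f ⟨⟨u, hu⟩, ⟨v, hvbd, hv⟩⟩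
      rw [hu]
      exact hVBmem u v hvbd (by rw [← hu, hv])
    have h2 : Submodule.span K
          (⇑(KaehlerDifferential.D K L : L →ₗ[K] Ω[L⁄K]) '' (VB : Set L))
        = VB.map (KaehlerDifferential.D K L : L →ₗ[K] Ω[L⁄K]) := by
      rw [← Submodule.map_span, Submodule.span_eq]
    exact Submodule.finiteDimensional_of_le
      ((Submodule.span_mono (Set.image_mono hsub)).trans h2.le)
end

section
/- Let R be a commutative ring and let Q ∈ R[x][y] be monic in y of degree d_x ≥ 1 such that every coefficient of Q (as a polynomial in y with coefficients in R[x]) has degree at most d_y in x, and let Δ(x) ∈ R[x] be the resultant of Q and ∂Q/∂y with respect to y. Then there exists a polynomial s ∈ R[x,y] with deg_y(s) ≤ d_x − 1 and deg_x(s) ≤ 2(d_x − 1)·d_y such that s·(∂Q/∂y) ≡ Δ(x) modulo the ideal generated by Q in R[x,y]. -/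
open Polynomial

lemma natDegree_det_le_sum {R : Type*} [CommRing R] {N : ℕ}
    (M : Matrix (Fin N) (Fin N) (Polynomial R)) (B : Fin N → ℕ)
    (h : ∀ i j, (M i j).natDegree ≤ B i) :
    M.det.natDegree ≤ ∑ i, B i := by
  rw [Matrix.det_apply']
  refine natDegree_sum_le_of_forall_le _ _ fun σ _ => ?_
  refine (natDegree_mul_le).trans ?_
  have h1 : ((Equiv.Perm.sign σ : ℤ) : Polynomial R).natDegree = 0 := natDegree_intCast _
  rw [h1, zero_add]
  refine (natDegree_prod_le _ _).trans ?_
  calc ∑ i, (M (σ i) i).natDegree ≤ ∑ i, B (σ i) := Finset.sum_le_sum fun i _ => h _ _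
    _ = ∑ i, B i := Equiv.sum_comp σ B

lemma sum_C_coeff_shift_mul_X_pow {R : Type*} [CommRing R] {N : ℕ} (P : Polynomial R) (a : ℕ)
    (h : P.natDegree + a < N) :
    (∑ i : Fin N, Polynomial.C (if a ≤ (i : ℕ) then P.coeff ((i : ℕ) - a) else 0) * X ^ (i : ℕ))
      = X ^ a * P := by
  have hsum : ∀ (t : ℕ) (c : Fin N → R),
      (∑ i : Fin N, Polynomial.C (c i) * X ^ (i : ℕ)).coeff t =
      if h : t < N then c ⟨t, h⟩ else 0 := by
    intro t c
    rw [Polynomial.finset_sum_coeff]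
    simp only [Polynomial.coeff_C_mul, Polynomial.coeff_X_pow, mul_ite, mul_one, mul_zero]
    split
    · next ht =>
      rw [Finset.sum_eq_single (⟨t, ht⟩ : Fin N)]
      · simp
      · intro i _ hi
        exact if_neg fun hit => hi (Fin.ext (by simpa using hit.symm))
      · simp
    · next ht =>
      refine Finset.sum_eq_zero fun i _ => ?_
      rw [if_neg]
      intro hit
      exact ht (hit ▸ i.isLt)
  refine Polynomial.ext fun t => ?_
  rw [hsum, (commute_X_pow P a).eq, Polynomial.coeff_mul_X_pow']
  split
  · rfl
  · next ht =>
    split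
    · next hat =>
      exact (Polynomial.coeff_eq_zero_of_natDegree_lt (by omega)).symm
    · rfl

/-- **Existence of `s = Δ(x)/(∂Q/∂y)` with degree bounds** (Propositions 2.4 and 4.1 of
the paper).  If `Q ∈ R[x][y]` is monic in `y` of degree `d_x ≥ 1` with all `x`-degrees of
its coefficients at most `d_y`, and `Δ(x)` is the resultant of `Q` and `∂Q/∂y` with
respect to `y`, then there is `s ∈ R[x,y]` with `deg_y s ≤ d_x - 1`,
`deg_x s ≤ 2(d_x-1)·d_y`, and `s · (∂Q/∂y) ≡ Δ(x) mod (Q)`. -/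
theorem exists_s_eq_discriminant_div_partialQ {R : Type*} [CommRing R]
    (Q : Polynomial (Polynomial R)) (dx dy : ℕ) (hdx : 1 ≤ dx)
    (hQ : Q.Monic) (hdeg : Q.natDegree = dx)
    (hcoeff : ∀ k, (Q.coeff k).natDegree ≤ dy)
    (Δ : Polynomial R) (hΔ : Δ = _root_.resultant Q (Polynomial.derivative Q) dx (dx - 1)) :
    ∃ s : Polynomial (Polynomial R),
      s.natDegree ≤ dx - 1 ∧
      (∀ k, (s.coeff k).natDegree ≤ 2 * (dx - 1) * dy) ∧
      s * Polynomial.derivative Q - Polynomial.C Δ ∈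
        Ideal.span ({Q} : Set (Polynomial (Polynomial R))) := by
  classical
  set n := dx - 1 with hn
  set N := n + dx with hNdef
  have hN0 : 0 < N := by omega
  set M : Matrix (Fin N) (Fin N) (Polynomial R) :=
    sylvesterMatrix Q (Polynomial.derivative Q) dx n with hM
  have hΔ' : Δ = M.det := hΔ
  -- entry degree bound
  have hder : ∀ k, ((Polynomial.derivative Q).coeff k).natDegree ≤ dy := by
    intro k
    rw [Polynomial.coeff_derivative]
    refine natDegree_mul_le.trans ?_
    rw [← Nat.cast_add_one, Polynomial.natDegree_natCast, add_zero]
    exact hcoeff (k + 1)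
  have hMdeg : ∀ i j, (M i j).natDegree ≤ dy := by
    intro i j
    rw [hM]
    unfold sylvesterMatrix
    dsimp only [Matrix.of_apply]
    split <;> split <;> simp [hcoeff, hder]
  -- column identity
  have hcol : ∀ j : Fin N, (∑ i : Fin N, Polynomial.C (M i j) * X ^ (i : ℕ)) =
      if (j : ℕ) < n then X ^ (j : ℕ) * Q
      else X ^ ((j : ℕ) - n) * Polynomial.derivative Q := by
    intro j
    by_cases hjn : (j : ℕ) < n
    · rw [if_pos hjn]
      have he : ∀ i : Fin N, M i j =
          if (j : ℕ) ≤ (i : ℕ) then Q.coeff ((i : ℕ) - (j : ℕ)) else 0 := by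
        intro i; rw [hM]; unfold sylvesterMatrix
        dsimp only [Matrix.of_apply]; rw [if_pos hjn]
      simp_rw [he]
      exact sum_C_coeff_shift_mul_X_pow Q (j : ℕ) (by rw [hdeg]; omega)
    · rw [if_neg hjn]
      have he : ∀ i : Fin N, M i j =
          if (j : ℕ) - n ≤ (i : ℕ) then
            (Polynomial.derivative Q).coeff ((i : ℕ) - ((j : ℕ) - n)) else 0 := by
        intro i; rw [hM]; unfold sylvesterMatrix
        dsimp only [Matrix.of_apply]; rw [if_neg hjn]
      simp_rw [he]
      refine sum_C_coeff_shift_mul_X_pow _ _ ?_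
      have h1 : (Polynomial.derivative Q).natDegree ≤ dx - 1 :=
        hdeg ▸ Polynomial.natDegree_derivative_le Q
      have h2 : (j : ℕ) < N := j.isLt
      omega
  -- the cofactor vector
  set z : Fin N := ⟨0, hN0⟩ with hz
  set b : Fin N → Polynomial R := fun j => (Matrix.adjugate (Matrix.transpose M)) z j with hb
  have hinner : ∀ i : Fin N, (∑ j, b j * M i j) = if i = z then Δ else 0 := by
    intro i
    have h1 : ((Matrix.adjugate (Matrix.transpose M)) * (Matrix.transpose M)) z i = ∑ j, b j * M i j := by
      simp [Matrix.mul_apply, Matrix.transpose_apply, hb]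
    rw [Matrix.adjugate_mul, Matrix.det_transpose] at h1
    rw [← h1, Matrix.smul_apply, Matrix.one_apply]
    rw [hΔ']
    by_cases hiz : i = z
    · rw [if_pos hiz, if_pos hiz.symm, smul_eq_mul, mul_one]
    · rw [if_neg hiz, if_neg (fun h => hiz h.symm), smul_eq_mul, mul_zero]
  -- cofactor degree bound
  have hbdeg : ∀ j, (b j).natDegree ≤ 2 * (dx - 1) * dy := by
    intro j
    rw [hb]
    dsimp only
    rw [Matrix.adjugate_apply]
    refine (natDegree_det_le_sum _ (fun i => if i = j then 0 else dy) ?_).trans ?_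
    · intro i k
      by_cases hij : i = j
      · subst hij
        rw [Matrix.updateRow_self]
        simp only [if_pos rfl, Pi.single_apply]
        split <;> simp
      · rw [Matrix.updateRow_ne hij]
        simp only [if_neg hij, Matrix.transpose_apply]
        exact hMdeg k i
    · rw [← Finset.add_sum_erase _ _ (Finset.mem_univ j), if_pos rfl, zero_add]
      have : ∀ i ∈ Finset.univ.erase j, (if i = j then 0 else dy) = dy := by
        intro i hi
        rw [if_neg (Finset.mem_erase.mp hi).1]
      rw [Finset.sum_congr rfl this, Finset.sum_const, Finset.card_erase_of_mem (Finset.mem_univ j),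
        Finset.card_univ, Fintype.card_fin, smul_eq_mul]
      have hN1 : N - 1 = 2 * (dx - 1) := by omega
      rw [hN1]
  -- key identity
  have key : Polynomial.C Δ = ∑ j : Fin N, Polynomial.C (b j) *
      (∑ i : Fin N, Polynomial.C (M i j) * X ^ (i : ℕ)) := by
    have h1 : ∀ j : Fin N, Polynomial.C (b j) * (∑ i : Fin N, Polynomial.C (M i j) * X ^ (i : ℕ))
        = ∑ i : Fin N, Polynomial.C (b j * M i j) * X ^ (i : ℕ) := by
      intro j
      rw [Finset.mul_sum]
      exact Finset.sum_congr rfl fun i _ => by rw [map_mul, mul_assoc]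
    rw [Finset.sum_congr rfl fun j _ => h1 j, Finset.sum_comm]
    have h2 : ∀ i : Fin N, ∑ j : Fin N, Polynomial.C (b j * M i j) * X ^ (i : ℕ)
        = Polynomial.C (if i = z then Δ else 0) * X ^ (i : ℕ) := by
      intro i
      rw [← Finset.sum_mul, ← map_sum, hinner i]
    rw [Finset.sum_congr rfl fun i _ => h2 i, Finset.sum_eq_single z]
    · simp [hz]
    · intro i _ hi
      rw [if_neg hi, map_zero, zero_mul]
    · intro h; exact absurd (Finset.mem_univ z) h
  -- split the sum
  set s : Polynomial (Polynomial R) :=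
    ∑ j ∈ Finset.univ.filter (fun j : Fin N => ¬ (j : ℕ) < n),
      Polynomial.C (b j) * X ^ ((j : ℕ) - n) with hs
  set a : Polynomial (Polynomial R) :=
    ∑ j ∈ Finset.univ.filter (fun j : Fin N => (j : ℕ) < n),
      Polynomial.C (b j) * X ^ (j : ℕ) with ha
  have hsplit : Polynomial.C Δ = a * Q + s * Polynomial.derivative Q := by
    rw [key, Finset.sum_congr rfl fun j _ => by rw [hcol j]]
    rw [← Finset.sum_filter_add_sum_filter_not Finset.univ (fun j : Fin N => (j : ℕ) < n)]
    refine congrArg₂ (· + ·) ?_ ?_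
    · rw [ha, Finset.sum_mul]
      refine Finset.sum_congr rfl fun j hj => ?_
      rw [if_pos (Finset.mem_filter.mp hj).2, mul_assoc]
    · rw [hs, Finset.sum_mul]
      refine Finset.sum_congr rfl fun j hj => ?_
      rw [if_neg (Finset.mem_filter.mp hj).2, mul_assoc]
  refine ⟨s, ?_, ?_, ?_⟩
  · rw [hs]
    refine natDegree_sum_le_of_forall_le _ _ fun j _ => ?_
    refine natDegree_mul_le.trans ?_
    rw [natDegree_C, zero_add]
    refine (natDegree_X_pow_le _).trans ?_
    have := j.isLt
    omega
  · intro k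
    rw [hs, Polynomial.finset_sum_coeff]
    refine natDegree_sum_le_of_forall_le _ _ fun j _ => ?_
    rw [Polynomial.coeff_C_mul, Polynomial.coeff_X_pow]
    split
    · rw [mul_one]; exact hbdeg j
    · rw [mul_zero, natDegree_zero]; exact Nat.zero_le _
  · rw [Ideal.mem_span_singleton]
    refine ⟨-a, ?_⟩
    have : s * Polynomial.derivative Q - Polynomial.C Δ = -(a * Q) := by
      rw [hsplit]; ring
    rw [this]; ring
end

section
/- Let p be a prime number, n ≥ 1 and g ≥ 1 integers, and set q = p^n. Call a polynomial χ ∈ ℤ[T] a Weil q-polynomial of genus g if χ has degree 2g, χ(0) = 1, every complex root z of χ satisfies |z| = q^{-1/2}, and q^g·T^{2g}·χ(1/(qT)) = χ(T) (the inverse roots of χ are permuted by t ↦ q/t). Let N₀ = max over 1 ≤ i ≤ g of (⌊log_p(4g/i) + n·i/2⌋ + 1), where log_p denotes the real logarithm to base p. If χ₁ and χ₂ are two Weil q-polynomials of genus g all of whose corresponding coefficients are congruent modulo p^{N₀}, then χ₁ = χ₂. -/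
open Polynomial

/-- A *Weil `q`-polynomial of genus `g`*: `χ ∈ ℤ[T]` has degree `2g`, constant term `1`,
all complex roots of absolute value `q^(-1/2)` (i.e. all inverse roots of absolute value
`q^(1/2)`), and its coefficients satisfy the functional equation
`q^g · T^{2g} · χ(1/(qT)) = χ(T)`, i.e. `χ.coeff i * q^g = χ.coeff (2g - i) * q^i`
for all `0 ≤ i ≤ 2g`. -/
def IsWeilPolynomial (q g : ℕ) (χ : Polynomial ℤ) : Prop :=
  χ.natDegree = 2 * g ∧
  χ.coeff 0 = 1 ∧
  (∀ z : ℂ, Polynomial.aeval z χ = 0 → ‖z‖ = (q : ℝ) ^ (-(1 : ℝ) / 2)) ∧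
  (∀ i ≤ 2 * g, χ.coeff i * (q : ℤ) ^ g = χ.coeff (2 * g - i) * (q : ℤ) ^ i)

open Finset in
lemma weil_root_data (q g : ℕ) (hq0 : 0 < q) (χ : Polynomial ℤ) (h : IsWeilPolynomial q g χ) :
    ∃ α : Fin (2*g) → ℂ,
      (∀ i, ‖α i‖ = (q:ℝ) ^ ((1:ℝ)/2)) ∧
      (∀ k, k ≤ 2*g → (χ.coeff k : ℂ) =
        (-1)^k * MvPolynomial.aeval α (MvPolynomial.esymm (Fin (2*g)) ℂ k)) := by
  obtain ⟨hdeg, hc0, hroots, hfe⟩ := h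
  set f : Polynomial ℂ := χ.map (Int.castRingHom ℂ) with hf
  have hfdeg : f.natDegree = 2*g := by
    rw [hf, natDegree_map_eq_of_injective Int.cast_injective, hdeg]
  set ψ : Polynomial ℂ := reflect (2*g) f with hψ
  have hc2g : χ.coeff (2*g) = (q:ℤ)^g := by
    have := hfe 0 (Nat.zero_le _)
    simpa [hc0] using this.symm
  have hψcoeff : ∀ k, ψ.coeff k = f.coeff (revAt (2*g) k) := fun k => coeff_reflect _ _ _
  have hψdegle : ψ.natDegree ≤ 2*g := by
    apply natDegree_le_iff_coeff_eq_zero.mpr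
    intro N hN
    rw [hψcoeff, revAt_eq_self_of_lt (by omega)]
    exact coeff_eq_zero_of_natDegree_lt (by omega)
  have hψtop : ψ.coeff (2*g) = 1 := by
    rw [hψcoeff, revAt_le le_rfl, Nat.sub_self, hf, coeff_map]
    simpa using hc0
  have hmonic : ψ.Monic := monic_of_natDegree_le_of_coeff_eq_one _ hψdegle hψtop
  have hψdeg : ψ.natDegree = 2*g :=
    le_antisymm hψdegle (le_natDegree_of_ne_zero (by rw [hψtop]; exact one_ne_zero))
  have hcard : Multiset.card ψ.roots = 2*g := by
    rw [← hψdeg]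
    exact splits_iff_card_roots.mp (IsAlgClosed.splits ψ)
  have hψ0ne : ψ.coeff 0 ≠ 0 := by
    rw [hψcoeff, revAt_le (Nat.zero_le _), Nat.sub_zero, hf, coeff_map, hc2g]
    simp only [eq_intCast, Int.cast_pow, Int.cast_natCast, ne_eq, pow_eq_zero_iff', Nat.cast_eq_zero]
    intro hc
    omega
  have habsroot : ∀ z ∈ ψ.roots, ‖z‖ = (q:ℝ) ^ ((1:ℝ)/2) := by
    intro z hz
    rw [mem_roots hmonic.ne_zero] at hz
    have hz0 : z ≠ 0 := by
      intro h0
      rw [h0, IsRoot, ← coeff_zero_eq_eval_zero] at hz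
      exact hψ0ne hz
    letI : Invertible (z⁻¹) := invertibleOfNonzero (inv_ne_zero hz0)
    have hinv : (⅟(z⁻¹) : ℂ) = z := by rw [invOf_eq_inv, inv_inv]
    have hev : eval₂ (RingHom.id ℂ) (⅟(z⁻¹)) (reflect (2*g) f) = 0 := by
      rw [hinv]; exact hz
    have hfz : eval₂ (RingHom.id ℂ) (z⁻¹) f = 0 :=
      (eval₂_reflect_eq_zero_iff (RingHom.id ℂ) (z⁻¹) (2*g) f hfdeg.le).mp hev
    have haev : Polynomial.aeval (z⁻¹) χ = 0 := by
      have : eval (z⁻¹) f = 0 := hfz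
      rw [hf, eval_map] at this
      simpa [aeval_def] using this
    have := hroots _ haev
    rw [norm_inv] at this
    have hq2 : (q:ℝ) ^ (-(1:ℝ)/2) = ((q:ℝ) ^ ((1:ℝ)/2))⁻¹ := by
      rw [← Real.rpow_neg (by positivity)]; norm_num
    rw [hq2] at this
    have := inv_injective this
    exact this
  -- enumerate roots
  have hlen : ψ.roots.toList.length = 2*g := by rw [Multiset.length_toList, hcard]
  refine ⟨fun i => ψ.roots.toList.get (Fin.cast hlen.symm i), ?_, ?_⟩
  · intro i
    apply habsroot
    rw [← Multiset.mem_toList]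
    apply List.get_mem
  · intro k hk
    have huniv : (Finset.univ.val.map fun i => ψ.roots.toList.get (Fin.cast hlen.symm i))
        = ψ.roots := by
      rw [Fin.univ_val_map]
      have : (List.ofFn fun i => ψ.roots.toList.get (Fin.cast hlen.symm i)) = ψ.roots.toList := by
        apply List.ext_getElem
        · simp [hlen]
        · intro i h1 h2
          simp [List.getElem_ofFn]
      rw [this, Multiset.coe_toList]
    rw [MvPolynomial.aeval_esymm_eq_multiset_esymm, huniv]
    have hco := Polynomial.coeff_eq_esymm_roots_of_card (hψdeg ▸ hcard) (k := 2*g - k)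
      (by omega)
    rw [hψcoeff, revAt_le (by omega), Nat.sub_sub_self hk, hf, coeff_map, hmonic.leadingCoeff,
      hψdeg] at hco
    have h2 : 2*g - (2*g - k) = k := by omega
    rw [h2] at hco
    simpa using hco


open Finset in
lemma newton_eval (m k : ℕ) (α : Fin m → ℂ) :
    (k:ℂ) * MvPolynomial.aeval α (MvPolynomial.esymm (Fin m) ℂ k) =
      (-1)^(k+1) * ∑ a ∈ Finset.filter (fun a => a.1 < k) (Finset.HasAntidiagonal.antidiagonal k),
        (-1)^a.1 * MvPolynomial.aeval α (MvPolynomial.esymm (Fin m) ℂ a.1) *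
          MvPolynomial.aeval α (MvPolynomial.psum (Fin m) ℂ a.2) := by
  have h := congrArg (MvPolynomial.aeval α) (MvPolynomial.mul_esymm_eq_sum (Fin m) ℂ k)
  simpa [map_sum, map_mul, map_pow] using h

lemma psum_eval (m k : ℕ) (α : Fin m → ℂ) :
    MvPolynomial.aeval α (MvPolynomial.psum (Fin m) ℂ k) = ∑ i, α i ^ k := by
  simp [MvPolynomial.psum, map_sum]

lemma psum_abs_le (m : ℕ) (α : Fin m → ℂ) (c : ℝ) (habs : ∀ i, ‖α i‖ = c) (k : ℕ) :
    ‖MvPolynomial.aeval α (MvPolynomial.psum (Fin m) ℂ k)‖ ≤ m * c ^ k := by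
  rw [psum_eval]
  calc ‖∑ i, α i ^ k‖ ≤ ∑ i : Fin m, ‖α i ^ k‖ :=
        norm_sum_le _ _
    _ = ∑ _i : Fin m, c ^ k := by simp [map_pow, habs]
    _ = m * c ^ k := by simp [Finset.sum_const, nsmul_eq_mul]

lemma key_ineq (p n g N₀ k : ℕ) (hp : p.Prime) (hn : 1 ≤ n) (hg : 1 ≤ g)
    (hk1 : 1 ≤ k) (hkg : k ≤ g)
    (hN₀ : N₀ = (Finset.Icc 1 g).sup
      (fun i => ⌊Real.logb p ((4 * g : ℝ) / (i : ℝ)) + (n : ℝ) * (i : ℝ) / 2⌋₊ + 1)) :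
    (4*g : ℝ) * ((p^n : ℕ):ℝ) ^ ((k:ℝ)/2) < (k:ℝ) * (p:ℝ) ^ N₀ := by
  have hp1 : (1:ℝ) < p := by exact_mod_cast hp.one_lt
  have hp0 : (0:ℝ) < p := by linarith
  have hk0 : (0:ℝ) < k := by exact_mod_cast hk1
  have hx0 : (0:ℝ) < (4*g:ℝ)/(k:ℝ) := by positivity
  set x : ℝ := Real.logb p ((4*g:ℝ)/(k:ℝ)) + (n:ℝ)*(k:ℝ)/2 with hxdef
  have hNk : ⌊x⌋₊ + 1 ≤ N₀ := by
    rw [hN₀]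
    exact Finset.le_sup (f := fun i : ℕ => ⌊Real.logb p ((4 * g : ℝ) / (i : ℝ)) + (n : ℝ) * (i : ℝ) / 2⌋₊ + 1) (Finset.mem_Icc.mpr ⟨hk1, hkg⟩)
  have hxlt : x < (N₀ : ℝ) := lt_of_lt_of_le (Nat.lt_floor_add_one x) (by exact_mod_cast hNk)
  have hpx : (p:ℝ) ^ x = (4*g:ℝ)/(k:ℝ) * ((p^n:ℕ):ℝ) ^ ((k:ℝ)/2) := by
    rw [hxdef, Real.rpow_add hp0, Real.rpow_logb hp0 (ne_of_gt hp1) hx0]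
    congr 1
    have : (n:ℝ)*(k:ℝ)/2 = (n:ℝ) * ((k:ℝ)/2) := by ring
    rw [this, Real.rpow_mul hp0.le, Real.rpow_natCast]
    push_cast
    rfl
  have hlt : (p:ℝ) ^ x < (p:ℝ) ^ (N₀:ℝ) := Real.rpow_lt_rpow_left_iff hp1 |>.mpr hxlt
  rw [hpx, Real.rpow_natCast] at hlt
  have := mul_lt_mul_of_pos_right hlt hk0
  calc (4*g:ℝ) * ((p^n:ℕ):ℝ) ^ ((k:ℝ)/2)
      = (4*g:ℝ)/(k:ℝ) * ((p^n:ℕ):ℝ) ^ ((k:ℝ)/2) * k := by field_simp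
    _ < (p:ℝ)^N₀ * k := this
    _ = (k:ℝ) * (p:ℝ)^N₀ := by ring


/-- **`p`-adic precision needed to recover the numerator of the zeta function**
(Proposition 5.2 of the paper).  Two Weil `q`-polynomials of genus `g` whose
coefficients are congruent modulo
`p^(N₀)`, where `N₀ = max_{1 ≤ i ≤ g} (⌊log_p(4g/i) + n·i/2⌋ + 1)`, are equal. -/
theorem weil_polynomial_determined_by_padic_approximation
    (p n g : ℕ) (hp : p.Prime) (hn : 1 ≤ n) (hg : 1 ≤ g)
    (q : ℕ) (hq : q = p ^ n)
    (N₀ : ℕ)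
    (hN₀ : N₀ = (Finset.Icc 1 g).sup
      (fun i => ⌊Real.logb p ((4 * g : ℝ) / (i : ℝ)) + (n : ℝ) * (i : ℝ) / 2⌋₊ + 1))
    (χ₁ χ₂ : Polynomial ℤ)
    (h₁ : IsWeilPolynomial q g χ₁) (h₂ : IsWeilPolynomial q g χ₂)
    (hcong : ∀ k, (p : ℤ) ^ N₀ ∣ χ₁.coeff k - χ₂.coeff k) :
    χ₁ = χ₂ := by
  have hq0 : 0 < q := hq ▸ pow_pos hp.pos n
  have hq0R : (0:ℝ) < q := by exact_mod_cast hq0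
  obtain ⟨α₁, habs₁, hco₁⟩ := weil_root_data q g hq0 χ₁ h₁
  obtain ⟨α₂, habs₂, hco₂⟩ := weil_root_data q g hq0 χ₂ h₂
  unfold IsWeilPolynomial at h₁ h₂
  set c : ℝ := (q:ℝ)^((1:ℝ)/2) with hc
  have hc0 : 0 ≤ c := by positivity
  have hck : ∀ k : ℕ, c ^ k = (q:ℝ) ^ ((k:ℝ)/2) := by
    intro k
    rw [hc, ← Real.rpow_natCast ((q:ℝ)^((1:ℝ)/2)) k, ← Real.rpow_mul hq0R.le]
    congr 1
    ring
  -- E's in terms of coefficients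
  have hE₁ : ∀ j ≤ 2*g, MvPolynomial.aeval α₁ (MvPolynomial.esymm (Fin (2*g)) ℂ j)
      = (-1)^j * (χ₁.coeff j : ℂ) := by
    intro j hj
    rw [hco₁ j hj, ← mul_assoc, ← mul_pow]
    simp
  have hE₂ : ∀ j ≤ 2*g, MvPolynomial.aeval α₂ (MvPolynomial.esymm (Fin (2*g)) ℂ j)
      = (-1)^j * (χ₂.coeff j : ℂ) := by
    intro j hj
    rw [hco₂ j hj, ← mul_assoc, ← mul_pow]
    simp
  have hmain : ∀ k, k ≤ g → (χ₁.coeff k = χ₂.coeff k ∧ (1 ≤ k →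
      MvPolynomial.aeval α₁ (MvPolynomial.psum (Fin (2*g)) ℂ k)
        = MvPolynomial.aeval α₂ (MvPolynomial.psum (Fin (2*g)) ℂ k))) := by
    intro k
    induction k using Nat.strong_induction_on with
    | _ k IH =>
      intro hkg
      rcases Nat.eq_zero_or_pos k with hk0 | hk1
      · subst hk0
        exact ⟨by rw [h₁.2.1, h₂.2.1], fun h => absurd h (by omega)⟩
      have hk2g : k ≤ 2*g := by omega
      have hN1 := newton_eval (2*g) k α₁
      have hN2 := newton_eval (2*g) k α₂
      -- difference of the sums
      have hsum : ((∑ a ∈ Finset.filter (fun a => a.1 < k) (Finset.HasAntidiagonal.antidiagonal k),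
            (-1)^a.1 * MvPolynomial.aeval α₁ (MvPolynomial.esymm (Fin (2*g)) ℂ a.1) *
              MvPolynomial.aeval α₁ (MvPolynomial.psum (Fin (2*g)) ℂ a.2))
          - (∑ a ∈ Finset.filter (fun a => a.1 < k) (Finset.HasAntidiagonal.antidiagonal k),
            (-1)^a.1 * MvPolynomial.aeval α₂ (MvPolynomial.esymm (Fin (2*g)) ℂ a.1) *
              MvPolynomial.aeval α₂ (MvPolynomial.psum (Fin (2*g)) ℂ a.2)))
          = MvPolynomial.aeval α₁ (MvPolynomial.psum (Fin (2*g)) ℂ k)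
            - MvPolynomial.aeval α₂ (MvPolynomial.psum (Fin (2*g)) ℂ k) := by
        rw [← Finset.sum_sub_distrib]
        have hmem : ((0 : ℕ), k) ∈ Finset.filter (fun a => a.1 < k) (Finset.HasAntidiagonal.antidiagonal k) := by
          simp [Finset.mem_filter, Finset.mem_antidiagonal, hk1]
        rw [Finset.sum_eq_single_of_mem (0, k) hmem ?side]
        · simp [MvPolynomial.esymm_zero]
        · intro b hb hne
          rw [Finset.mem_filter, Finset.HasAntidiagonal.mem_antidiagonal] at hb
          obtain ⟨hab, hb1⟩ := hb
          have hb1pos : 0 < b.1 := by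
            rcases Nat.eq_zero_or_pos b.1 with h0 | h0
            · exact absurd (Prod.ext h0 (by omega)) hne
            · exact h0
          have hb2lt : b.2 < k := by omega
          have hb21 : 1 ≤ b.2 := by omega
          have hcoefEq := (IH b.1 (by omega) (by omega)).1
          have hPEq := (IH b.2 (by omega) (by omega)).2 hb21
          rw [hE₁ b.1 (by omega), hE₂ b.1 (by omega), hcoefEq, hPEq]
          ring
      have hdiff : (k:ℂ) * ((-1)^k * ((χ₁.coeff k : ℂ) - (χ₂.coeff k : ℂ)))
          = (-1)^(k+1) * (MvPolynomial.aeval α₁ (MvPolynomial.psum (Fin (2*g)) ℂ k)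
            - MvPolynomial.aeval α₂ (MvPolynomial.psum (Fin (2*g)) ℂ k)) := by
        have : (k:ℂ) * (MvPolynomial.aeval α₁ (MvPolynomial.esymm (Fin (2*g)) ℂ k)
            - MvPolynomial.aeval α₂ (MvPolynomial.esymm (Fin (2*g)) ℂ k))
            = (-1)^(k+1) * (MvPolynomial.aeval α₁ (MvPolynomial.psum (Fin (2*g)) ℂ k)
            - MvPolynomial.aeval α₂ (MvPolynomial.psum (Fin (2*g)) ℂ k)) := by
          rw [mul_sub, hN1, hN2, ← mul_sub, hsum]
        rwa [hE₁ k hk2g, hE₂ k hk2g, ← mul_sub] at this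
      -- absolute values
      set δ : ℤ := χ₁.coeff k - χ₂.coeff k with hδ
      have habsLHS : ‖(k:ℂ) * ((-1)^k * ((χ₁.coeff k : ℂ) - (χ₂.coeff k : ℂ)))‖
          = (k:ℝ) * |(δ:ℝ)| := by
        rw [show ((χ₁.coeff k : ℂ) - (χ₂.coeff k : ℂ)) = ((δ : ℤ) : ℂ) by push_cast [hδ]; ring,
          norm_mul, norm_mul, norm_pow, Complex.norm_natCast, Complex.norm_intCast,
          norm_neg, norm_one]
        ring
      have habsRHS : ‖(-1:ℂ)^(k+1) * (MvPolynomial.aeval α₁ (MvPolynomial.psum (Fin (2*g)) ℂ k)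
            - MvPolynomial.aeval α₂ (MvPolynomial.psum (Fin (2*g)) ℂ k))‖
          ≤ (4*g:ℝ) * (q:ℝ)^((k:ℝ)/2) := by
        rw [norm_mul, norm_pow, norm_neg, norm_one, one_pow, one_mul]
        calc ‖MvPolynomial.aeval α₁ (MvPolynomial.psum (Fin (2*g)) ℂ k)
            - MvPolynomial.aeval α₂ (MvPolynomial.psum (Fin (2*g)) ℂ k)‖
            ≤ ‖MvPolynomial.aeval α₁ (MvPolynomial.psum (Fin (2*g)) ℂ k)‖
              + ‖MvPolynomial.aeval α₂ (MvPolynomial.psum (Fin (2*g)) ℂ k)‖ :=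
              by
                have := norm_add_le (MvPolynomial.aeval α₁ (MvPolynomial.psum (Fin (2*g)) ℂ k))
                  (-(MvPolynomial.aeval α₂ (MvPolynomial.psum (Fin (2*g)) ℂ k)))
                rwa [← sub_eq_add_neg, norm_neg] at this
          _ ≤ (2*g:ℕ) * c^k + (2*g:ℕ) * c^k :=
              add_le_add (psum_abs_le (2*g) α₁ c habs₁ k) (psum_abs_le (2*g) α₂ c habs₂ k)
          _ = (4*g:ℝ) * (q:ℝ)^((k:ℝ)/2) := by rw [hck]; push_cast; ring
      have hkey := key_ineq p n g N₀ k hp hn hg hk1 hkg hN₀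
      rw [← hq] at hkey
      have hδ0 : δ = 0 := by
        by_contra hne
        have hdvd : (p:ℤ)^N₀ ∣ |δ| := (dvd_abs _ _).mpr (hcong k)
        have hle : (p:ℤ)^N₀ ≤ |δ| := Int.le_of_dvd (abs_pos.mpr hne) hdvd
        have hleR : (p:ℝ)^N₀ ≤ |(δ:ℝ)| := by
          rw [← Int.cast_abs]
          exact_mod_cast hle
        have hchain : (k:ℝ) * (p:ℝ)^N₀ ≤ (4*g:ℝ) * (q:ℝ)^((k:ℝ)/2) := by
          calc (k:ℝ) * (p:ℝ)^N₀ ≤ (k:ℝ) * |(δ:ℝ)| := by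
                apply mul_le_mul_of_nonneg_left hleR (by positivity)
            _ = ‖(k:ℂ) * ((-1)^k * ((χ₁.coeff k : ℂ) - (χ₂.coeff k : ℂ)))‖ :=
                habsLHS.symm
            _ = ‖(-1:ℂ)^(k+1) * (MvPolynomial.aeval α₁ (MvPolynomial.psum (Fin (2*g)) ℂ k)
                - MvPolynomial.aeval α₂ (MvPolynomial.psum (Fin (2*g)) ℂ k))‖ := by rw [hdiff]
            _ ≤ (4*g:ℝ) * (q:ℝ)^((k:ℝ)/2) := habsRHS
        linarith
      have hcoefk : χ₁.coeff k = χ₂.coeff k := by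
        have := sub_eq_zero.mp hδ0
        exact this
      refine ⟨hcoefk, fun _ => ?_⟩
      have : ((-1:ℂ))^(k+1) * (MvPolynomial.aeval α₁ (MvPolynomial.psum (Fin (2*g)) ℂ k)
          - MvPolynomial.aeval α₂ (MvPolynomial.psum (Fin (2*g)) ℂ k)) = 0 := by
        rw [← hdiff, hcoefk]
        ring
      rcases mul_eq_zero.mp this with h | h
      · exact absurd h (pow_ne_zero _ (by norm_num))
      · exact sub_eq_zero.mp h
  -- finish
  ext m
  rcases le_or_gt m g with hm | hm
  · exact (hmain m hm).1
  rcases le_or_gt m (2*g) with hm2 | hm2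
  · set i := 2*g - m with hi
    have him : 2*g - i = m := by omega
    have e₁ := h₁.2.2.2 i (by omega)
    have e₂ := h₂.2.2.2 i (by omega)
    rw [him] at e₁ e₂
    have hci : χ₁.coeff i = χ₂.coeff i := (hmain i (by omega)).1
    have : χ₁.coeff m * (q:ℤ)^i = χ₂.coeff m * (q:ℤ)^i := by
      rw [← e₁, ← e₂, hci]
    exact mul_right_cancel₀ (pow_ne_zero i (by exact_mod_cast hq0.ne')) this
  · rw [coeff_eq_zero_of_natDegree_lt (h₁.1 ▸ hm2),
      coeff_eq_zero_of_natDegree_lt (h₂.1 ▸ hm2)]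
end
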